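/- For the exponential distribution with rate 1/β (β > 0), the sequence defined by v_0 ∈ ℝ and v_{n+1} = v_n + β·e^{-v_n/β} satisfies v_n / (β log n) → 1 as n → ∞. -/

import Mathlib

open Filter Real

lemma exp_le_inv_one_sub' (x : ℝ) (hx : x < 1) : Real.exp x ≤ (1 - x)⁻¹ := by
  rw [le_inv_comm₀ (Real.exp_pos x) (by linarith)]
  have h := Real.add_one_le_exp (-x)
  calc 1 - x ≤ Real.exp (-x) := by linarith
    _ = (Real.exp x)⁻¹ := by rw [Real.exp_neg]

/-- For the exponential distribution with rate `1/β` (`β > 0`), the value sequence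
`v_{n+1} = v_n + β e^{-v_n/β}` satisfies `v_n / (β log n) → 1`. -/
theorem stmt_1 (β : ℝ) (hβ : 0 < β) (v : ℕ → ℝ)
    (hrec : ∀ n, v (n + 1) = v n + β * Real.exp (-(v n) / β)) :
    Tendsto (fun n : ℕ => v n / (β * Real.log n)) atTop (nhds 1) := by
  set u : ℕ → ℝ := fun n => Real.exp (v n / β) with hu
  have hupos : ∀ n, 0 < u n := fun n => Real.exp_pos _
  have hstep : ∀ n, u (n + 1) = u n * Real.exp (u n)⁻¹ := by
    intro n
    have h1 : v (n + 1) / β = v n / β + Real.exp (-(v n) / β) := by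
      rw [hrec n]; field_simp
    simp only [hu, h1, Real.exp_add]
    congr 2
    rw [← Real.exp_neg]
    congr 1
    ring
  -- lower bound: u 0 + n ≤ u n
  have hlow : ∀ n, u 0 + n ≤ u n := by
    intro n
    induction n with
    | zero => simp
    | succ k ih =>
      have h1 : u k + 1 ≤ u (k + 1) := by
        rw [hstep k]
        have := Real.add_one_le_exp (u k)⁻¹
        calc u k + 1 = u k * (1 + (u k)⁻¹) := by
              rw [mul_add, mul_one, mul_inv_cancel₀ (hupos k).ne']
          _ ≤ u k * Real.exp (u k)⁻¹ := by
              apply mul_le_mul_of_nonneg_left _ (hupos k).le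
              linarith
      push_cast
      linarith
  -- one-step upper bound
  have hstepub : ∀ n, 1 < u n → u (n + 1) ≤ u n + 1 + (u n - 1)⁻¹ := by
    intro n h1
    rw [hstep n]
    have hx : (u n)⁻¹ < 1 := by
      rw [inv_lt_one_iff₀]; right; exact h1
    have hb := exp_le_inv_one_sub' (u n)⁻¹ hx
    calc u n * Real.exp (u n)⁻¹ ≤ u n * (1 - (u n)⁻¹)⁻¹ :=
          mul_le_mul_of_nonneg_left hb (hupos n).le
      _ = u n + 1 + (u n - 1)⁻¹ := by
          have h0 : u n ≠ 0 := (hupos n).ne'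
          have h2 : u n - 1 ≠ 0 := sub_ne_zero.mpr h1.ne'
          field_simp
          ring
  -- upper bound for n ≥ 3
  have hup : ∀ k : ℕ, u (k + 3) ≤ u 3 + k + 2 * (Real.log (k + 3) - Real.log 3) := by
    intro k
    induction k with
    | zero => simp
    | succ k ih =>
      have hgt1 : 1 < u (k + 3) := by
        have hl := hlow (k + 3)
        have h0 := hupos 0
        push_cast at hl
        linarith
      have h1 := hstepub (k + 3) hgt1
      have hub2 : (u (k + 3) - 1)⁻¹ ≤ 2 / ((k:ℝ) + 4) := by
        have hlarge : ((k:ℝ) + 4) / 2 ≤ u (k + 3) - 1 := by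
          have hl := hlow (k + 3)
          push_cast at hl
          have h0 := hupos 0
          linarith
        have hpos : (0:ℝ) < ((k:ℝ) + 4) / 2 := by positivity
        calc (u (k + 3) - 1)⁻¹ ≤ (((k:ℝ) + 4) / 2)⁻¹ := by
              gcongr
          _ = 2 / ((k:ℝ) + 4) := by rw [inv_div]
      have hlog : 2 / ((k:ℝ) + 4) ≤ 2 * (Real.log ((k:ℝ) + 4) - Real.log ((k:ℝ) + 3)) := by
        have hpos3 : (0:ℝ) < (k:ℝ) + 3 := by positivity
        have hpos4 : (0:ℝ) < (k:ℝ) + 4 := by positivity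
        have hle := Real.log_le_sub_one_of_pos (show (0:ℝ) < ((k:ℝ)+3)/((k:ℝ)+4) by positivity)
        rw [Real.log_div (by linarith) (by linarith)] at hle
        have heq : ((k:ℝ)+3)/((k:ℝ)+4) - 1 = -(1/((k:ℝ)+4)) := by
          field_simp
          norm_num
        rw [heq] at hle
        have h2 : 1/((k:ℝ)+4) ≤ Real.log ((k:ℝ)+4) - Real.log ((k:ℝ)+3) := by linarith
        calc 2 / ((k:ℝ) + 4) = 2 * (1/((k:ℝ)+4)) := by ring
          _ ≤ 2 * (Real.log ((k:ℝ)+4) - Real.log ((k:ℝ)+3)) := by linarith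
      have hstep2 : u (k + 1 + 3) ≤ u (k + 3) + 1 + 2 * (Real.log ((k:ℝ)+4) - Real.log ((k:ℝ)+3)) := by
        have he : k + 1 + 3 = (k + 3) + 1 := by ring
        rw [he]
        linarith
      push_cast at ih ⊢
      have hrw : (k:ℝ) + 1 + 3 = (k:ℝ) + 4 := by ring
      rw [hrw]
      linarith
  have hnat : Tendsto (fun n : ℕ => (n:ℝ)) atTop atTop := tendsto_natCast_atTop_atTop
  have hlogn : Tendsto (fun n : ℕ => Real.log n) atTop atTop :=
    Real.tendsto_log_atTop.comp hnat
  -- u n / n → 1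
  have hdiv : Tendsto (fun n : ℕ => u n / n) atTop (nhds 1) := by
    have hlowlim : Tendsto (fun n : ℕ => (u 0 + n) / n) atTop (nhds 1) := by
      have h : Tendsto (fun n : ℕ => u 0 * (n:ℝ)⁻¹ + 1) atTop (nhds (u 0 * 0 + 1)) := by
        apply Tendsto.add _ tendsto_const_nhds
        exact Tendsto.const_mul _ (hnat.inv_tendsto_atTop)
      rw [mul_zero, zero_add] at h
      apply h.congr'
      filter_upwards [eventually_gt_atTop 0] with n hn
      have hne : (n:ℝ) ≠ 0 := Nat.cast_ne_zero.mpr hn.ne'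
      field_simp
    have huplim : Tendsto (fun n : ℕ => (u 3 + n + 2 * (Real.log n - Real.log 3)) / n)
        atTop (nhds 1) := by
      have hlogdiv : Tendsto (fun n : ℕ => Real.log n / n) atTop (nhds 0) :=
        (Real.isLittleO_log_id_atTop.tendsto_div_nhds_zero).comp hnat
      have hinv : Tendsto (fun n : ℕ => (n:ℝ)⁻¹) atTop (nhds 0) := hnat.inv_tendsto_atTop
      have h : Tendsto (fun n : ℕ => (u 3 - 2 * Real.log 3) * (n:ℝ)⁻¹ + 1
          + 2 * (Real.log n / n)) atTop (nhds ((u 3 - 2 * Real.log 3) * 0 + 1 + 2 * 0)) := by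
        apply Tendsto.add (Tendsto.add (Tendsto.const_mul _ hinv) tendsto_const_nhds)
        exact Tendsto.const_mul _ hlogdiv
      simp only [mul_zero, zero_add, add_zero] at h
      apply h.congr'
      filter_upwards [eventually_gt_atTop 0] with n hn
      have hne : (n:ℝ) ≠ 0 := Nat.cast_ne_zero.mpr hn.ne'
      field_simp
      ring
    apply tendsto_of_tendsto_of_tendsto_of_le_of_le' hlowlim huplim
    · filter_upwards [eventually_gt_atTop 0] with n hn
      have hnp : (0:ℝ) < n := by exact_mod_cast hn
      gcongr
      exact hlow n
    · filter_upwards [eventually_ge_atTop 3] with n hn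
      have hnp : (0:ℝ) < n := by
        have : (0:ℕ) < n := by omega
        exact_mod_cast this
      obtain ⟨k, rfl⟩ := Nat.exists_eq_add_of_le hn
      have h := hup k
      rw [add_comm 3 k] at *
      gcongr
      push_cast at h ⊢
      have : Real.log ((k:ℝ) + 3) = Real.log (((k + 3 : ℕ) : ℝ)) := by push_cast; ring_nf
      linarith [h]
  -- log (u n / n) → 0, i.e. v n / β - log n → 0
  have hlog0 : Tendsto (fun n : ℕ => v n / β - Real.log n) atTop (nhds 0) := by
    have h := hdiv.log one_ne_zero
    rw [Real.log_one] at h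
    apply h.congr'
    filter_upwards [eventually_gt_atTop 0] with n hn
    have hne : (n:ℝ) ≠ 0 := Nat.cast_ne_zero.mpr hn.ne'
    show Real.log (u n / n) = v n / β - Real.log n
    rw [Real.log_div (hupos n).ne' hne]
    simp [hu, Real.log_exp]
  -- conclude
  have hfin : Tendsto (fun n : ℕ => (v n / β - Real.log n) * (Real.log n)⁻¹ + 1)
      atTop (nhds 1) := by
    have h := (hlog0.mul (hlogn.inv_tendsto_atTop)).add (tendsto_const_nhds (x := (1:ℝ)))
    simpa using h
  apply hfin.congr'
  filter_upwards [eventually_ge_atTop 2] with n hn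
  have hlogpos : 0 < Real.log n := by
    apply Real.log_pos
    have : (2:ℕ) ≤ n := hn
    exact_mod_cast lt_of_lt_of_le one_lt_two (by exact_mod_cast this)
  have hne : Real.log n ≠ 0 := hlogpos.ne'
  field_simp
  ring
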